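/- Let g, h₀ > 0 and ω ≠ 0. For h > 0 set S(h) = √(g h + ω²h²/4), U(h) = ωh/2 + S(h) + (g/ω)·log(2g + ω²h + 2ω S(h)), and Λ(h) = (ω h₀)/2 + 2S(h) + (g/ω)·log(2g + ω²h + 2ω S(h)) − S(h₀) − (g/ω)·log(2g + ω²h₀ + 2ω S(h₀)). Let f : ℝ → (0,∞) be continuously differentiable, let I ⊆ ℝ be an open interval, and suppose σ : ℝ × I → ℝ is differentiable and satisfies x = σ(x,t) + t·Λ(f(σ(x,t))) for all (x,t) ∈ ℝ × I. Then h(x,t) := f(σ(x,t)) and u(x,t) := U(f(σ(x,t))) − U(h₀) solve the vorticity-modified shallow water equations: ∂ₜh + ω h₀ ∂ₓh + ∂ₓ(u h) − ω h ∂ₓh = 0 and ∂ₜu + ω h₀ ∂ₓu + g ∂ₓh + u ∂ₓu = 0 at every point of ℝ × I. -/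

import Mathlib

open Real

private lemma sw_aux1 (g ω b Sb : ℝ) (hω : ω ≠ 0) (hSb : Sb ≠ 0)
    (hD : 2*g + ω^2*b + 2*ω*Sb ≠ 0) :
    g / ω * ((ω^2 + 2*ω*((g + ω^2*b/2)/(2*Sb))) / (2*g + ω^2*b + 2*ω*Sb)) = g/(2*Sb) := by
  field_simp
  rw [div_eq_iff (by intro h; apply hD; linarith)]
  ring

private lemma sw_aux2 (g ω b Sb : ℝ) (hSb : Sb ≠ 0) (hSb2 : Sb*Sb = g*b + ω^2*b^2/4) :
    b * (ω/2 + (g + ω^2*b/2)/(2*Sb) + g/(2*Sb)) = ω*b/2 + Sb := by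
  field_simp
  linear_combination (-4) * hSb2

private lemma sw_aux3 (g ω b Sb : ℝ) (hSb : Sb ≠ 0) (hSb2 : Sb*Sb = g*b + ω^2*b^2/4) :
    (ω/2 + (g + ω^2*b/2)/(2*Sb) + g/(2*Sb)) * (ω*b/2 - Sb) + g = 0 := by
  field_simp
  linear_combination (-4*ω) * hSb2


/-- A simple wave constructed by the method of characteristics solves the
vorticity-modified shallow water equations: if the characteristic foot `σ(x,t)` is
differentiable and satisfies `x = σ(x,t) + t·Λ(f(σ(x,t)))`, then
`h(x,t) = f(σ(x,t))`, `u(x,t) = U(f(σ(x,t))) - U(h₀)` solve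
`hₜ + ωh₀hₓ + (uh)ₓ - ωhhₓ = 0`, `uₜ + ωh₀uₓ + ghₓ + uuₓ = 0` on `ℝ × I`. -/
theorem simple_wave_solves_shallow_water
    (g h₀ ω : ℝ) (hg : 0 < g) (hh₀ : 0 < h₀) (hω : ω ≠ 0)
    (S U Lam : ℝ → ℝ)
    (hS : ∀ h : ℝ, S h = Real.sqrt (g * h + ω ^ 2 * h ^ 2 / 4))
    (hU : ∀ h : ℝ, U h
      = ω * h / 2 + S h + g / ω * Real.log (2 * g + ω ^ 2 * h + 2 * ω * S h))
    (hLam : ∀ h : ℝ, Lam h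
      = ω * h₀ / 2 + 2 * S h + g / ω * Real.log (2 * g + ω ^ 2 * h + 2 * ω * S h)
        - S h₀ - g / ω * Real.log (2 * g + ω ^ 2 * h₀ + 2 * ω * S h₀))
    (f : ℝ → ℝ) (hf : ContDiff ℝ 1 f) (hfpos : ∀ s : ℝ, 0 < f s)
    (I : Set ℝ) (hIopen : IsOpen I) (hIord : I.OrdConnected)
    (σ : ℝ → ℝ → ℝ)
    (hσdiff : DifferentiableOn ℝ (fun q : ℝ × ℝ => σ q.1 q.2) (Set.univ ×ˢ I))
    (hσ : ∀ x : ℝ, ∀ t ∈ I, x = σ x t + t * Lam (f (σ x t)))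
    (h u : ℝ → ℝ → ℝ)
    (hh : ∀ x t : ℝ, h x t = f (σ x t))
    (hu : ∀ x t : ℝ, u x t = U (f (σ x t)) - U h₀) :
    ∀ x : ℝ, ∀ t ∈ I,
      (deriv (fun t' => h x t') t + ω * h₀ * deriv (fun x' => h x' t) x
        + deriv (fun x' => u x' t * h x' t) x
        - ω * h x t * deriv (fun x' => h x' t) x = 0) ∧
      (deriv (fun t' => u x t') t + ω * h₀ * deriv (fun x' => u x' t) x
        + g * deriv (fun x' => h x' t) x + u x t * deriv (fun x' => u x' t) x = 0) := by
  intro x t ht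
  set s₀ := σ x t with hs₀
  set b := f s₀ with hbdef
  have hb : 0 < b := hfpos s₀
  have hPb : 0 < g * b + ω ^ 2 * b ^ 2 / 4 := by nlinarith [mul_pos hg hb, sq_nonneg (ω * b)]
  have hSbpos : 0 < S b := by rw [hS]; exact Real.sqrt_pos.2 hPb
  have hSb2 : S b * S b = g * b + ω ^ 2 * b ^ 2 / 4 := by
    rw [hS]; exact Real.mul_self_sqrt hPb.le
  have hy : 0 < 2 * g + ω ^ 2 * b := by nlinarith [mul_nonneg (sq_nonneg ω) hb.le]
  have hsq : (2 * |ω| * S b) ^ 2 < (2 * g + ω ^ 2 * b) ^ 2 := by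
    have h1 : |ω| ^ 2 = ω ^ 2 := sq_abs ω
    nlinarith [hSb2, mul_pos hg hg, h1]
  have habs : 2 * |ω| * S b < 2 * g + ω ^ 2 * b := by
    have h2 : (0:ℝ) ≤ 2 * |ω| * S b := by positivity
    nlinarith [hsq, h2, hy]
  have hD : 0 < 2 * g + ω ^ 2 * b + 2 * ω * S b := by
    nlinarith [mul_le_mul_of_nonneg_right (neg_abs_le ω) hSbpos.le, habs]
  -- derivative of the polynomial under the sqrt
  have hP : HasDerivAt (fun y : ℝ => g * y + ω ^ 2 * y ^ 2 / 4) (g + ω ^ 2 * b / 2) b := by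
    have h1 : HasDerivAt (fun y : ℝ => g * y) (g * 1) b := (hasDerivAt_id b).const_mul g
    have h2 : HasDerivAt (fun y : ℝ => ω ^ 2 * y ^ 2 / 4) (ω ^ 2 * ((2 : ℕ) * b ^ 1) / 4) b :=
      ((hasDerivAt_pow 2 b).const_mul (ω ^ 2)).div_const 4
    refine (h1.add h2).congr_deriv ?_
    push_cast; ring
  -- derivative of S
  set S' : ℝ := (g + ω ^ 2 * b / 2) / (2 * S b) with hS'def
  have hSd : HasDerivAt S S' b := by
    have hs := (Real.hasDerivAt_sqrt hPb.ne').comp b hP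
    have hfun : S = fun y => Real.sqrt (g * y + ω ^ 2 * y ^ 2 / 4) := funext hS
    rw [hS'def, hS, hfun]
    refine hs.congr_deriv ?_
    ring
  -- derivative of the log argument
  have hDd : HasDerivAt (fun y : ℝ => 2 * g + ω ^ 2 * y + 2 * ω * S y)
      (ω ^ 2 + 2 * ω * S') b := by
    have h1 : HasDerivAt (fun y : ℝ => ω ^ 2 * y) (ω ^ 2 * 1) b :=
      (hasDerivAt_id b).const_mul (ω ^ 2)
    have h2 := hSd.const_mul (2 * ω)
    refine ((h1.const_add (2 * g)).add h2).congr_deriv ?_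
    ring
  have hLogd : HasDerivAt (fun y : ℝ => Real.log (2 * g + ω ^ 2 * y + 2 * ω * S y))
      ((ω ^ 2 + 2 * ω * S') / (2 * g + ω ^ 2 * b + 2 * ω * S b)) b := by
    have := (Real.hasDerivAt_log hD.ne').comp b hDd
    refine this.congr_deriv ?_
    field_simp
  -- derivatives of U and Lam
  set W : ℝ := g / ω * ((ω ^ 2 + 2 * ω * S') / (2 * g + ω ^ 2 * b + 2 * ω * S b)) with hWdef
  set U' : ℝ := ω / 2 + S' + W with hU'def
  set L' : ℝ := 2 * S' + W with hL'def
  have hUd : HasDerivAt U U' b := by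
    have hfun : U = fun y => ω * y / 2 + S y
        + g / ω * Real.log (2 * g + ω ^ 2 * y + 2 * ω * S y) := funext hU
    rw [hfun]
    have h1 : HasDerivAt (fun y : ℝ => ω * y / 2) (ω / 2) b := by
      simpa using ((hasDerivAt_id b).const_mul ω).div_const 2
    have := (h1.add hSd).add (hLogd.const_mul (g / ω))
    exact this
  have hLd : HasDerivAt Lam L' b := by
    have hfun : Lam = fun y => ω * h₀ / 2 + 2 * S y
        + g / ω * Real.log (2 * g + ω ^ 2 * y + 2 * ω * S y)
        - S h₀ - g / ω * Real.log (2 * g + ω ^ 2 * h₀ + 2 * ω * S h₀) := funext hLam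
    rw [hfun]
    have h2 := hSd.const_mul (2 : ℝ)
    have := (((h2.const_add (ω * h₀ / 2)).add (hLogd.const_mul (g / ω))).sub_const
      (S h₀)).sub_const (g / ω * Real.log (2 * g + ω ^ 2 * h₀ + 2 * ω * S h₀))
    exact this
  -- derivative of f
  have hfd : HasDerivAt f (deriv f s₀) s₀ :=
    ((hf.differentiable one_ne_zero) s₀).hasDerivAt
  set F' : ℝ := deriv f s₀ with hF'def
  -- partial derivatives of σ
  have hopen : IsOpen ((Set.univ : Set ℝ) ×ˢ I) := isOpen_univ.prod hIopen
  have hmem : ((x, t) : ℝ × ℝ) ∈ (Set.univ : Set ℝ) ×ˢ I := ⟨Set.mem_univ x, ht⟩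
  have hσat : DifferentiableAt ℝ (fun q : ℝ × ℝ => σ q.1 q.2) (x, t) :=
    hσdiff.differentiableAt (hopen.mem_nhds hmem)
  have hσxd : DifferentiableAt ℝ (fun x' => σ x' t) x := by
    have := hσat.comp x (differentiableAt_fun_id.prodMk (differentiableAt_const t) :
      DifferentiableAt ℝ (fun x' : ℝ => (x', t)) x)
    simpa [Function.comp_def] using this
  have hσtd : DifferentiableAt ℝ (fun t' => σ x t') t := by
    have := hσat.comp t ((differentiableAt_const x).prodMk differentiableAt_fun_id)
    simpa [Function.comp_def] using this
  set A : ℝ := deriv (fun x' => σ x' t) x with hAdef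
  set B : ℝ := deriv (fun t' => σ x t') t with hBdef
  have hA : HasDerivAt (fun x' => σ x' t) A x := hσxd.hasDerivAt
  have hB : HasDerivAt (fun t' => σ x t') B t := hσtd.hasDerivAt
  -- G = Lam ∘ f ∘ σ
  have hGb : HasDerivAt (fun s => Lam (f s)) (L' * F') s₀ := hLd.comp s₀ hfd
  have hGx : HasDerivAt (fun x' => Lam (f (σ x' t))) (L' * F' * A) x := by
    have := hGb.comp x hA
    simpa [Function.comp_def, mul_assoc] using this
  have hGt : HasDerivAt (fun t' => Lam (f (σ x t'))) (L' * F' * B) t := by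
    have := hGb.comp t hB
    simpa [Function.comp_def, mul_assoc] using this
  -- implicit differentiation in x
  have e1 : A + t * (L' * F' * A) = 1 := by
    have hlhs : HasDerivAt (fun x' => σ x' t + t * Lam (f (σ x' t)))
        (A + t * (L' * F' * A)) x := hA.add (hGx.const_mul t)
    have hid : (fun x' : ℝ => σ x' t + t * Lam (f (σ x' t))) = fun x' => x' :=
      funext fun x' => (hσ x' t ht).symm
    have : HasDerivAt (fun x' => σ x' t + t * Lam (f (σ x' t))) 1 x := by
      rw [hid]; exact hasDerivAt_id x
    exact hlhs.unique this
  -- implicit differentiation in t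
  have e2 : B + (1 * Lam (f (σ x t)) + t * (L' * F' * B)) = 0 := by
    have hlhs : HasDerivAt (fun t' => σ x t' + t' * Lam (f (σ x t')))
        (B + (1 * Lam (f (σ x t)) + t * (L' * F' * B))) t :=
      hB.add ((hasDerivAt_id t).mul hGt)
    have hconst : HasDerivAt (fun t' : ℝ => σ x t' + t' * Lam (f (σ x t'))) 0 t := by
      have hev : (fun t' : ℝ => σ x t' + t' * Lam (f (σ x t'))) =ᶠ[nhds t]
          (fun _ => x) := by
        filter_upwards [hIopen.mem_nhds ht] with t' ht' using (hσ x t' ht').symm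
      exact (hasDerivAt_const t x).congr_of_eventuallyEq hev
    exact hlhs.unique hconst
  -- derivatives of h and u
  have hhx : HasDerivAt (fun x' => h x' t) (F' * A) x := by
    have : (fun x' => h x' t) = fun x' => f (σ x' t) := funext fun x' => hh x' t
    rw [this]
    simpa [Function.comp_def] using (hfd.comp x hA)
  have hht : HasDerivAt (fun t' => h x t') (F' * B) t := by
    have : (fun t' => h x t') = fun t' => f (σ x t') := funext fun t' => hh x t'
    rw [this]
    simpa [Function.comp_def] using (hfd.comp t hB)
  have hUfb : HasDerivAt (fun s => U (f s)) (U' * F') s₀ := hUd.comp s₀ hfd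
  have hux : HasDerivAt (fun x' => u x' t) (U' * F' * A) x := by
    have : (fun x' => u x' t) = fun x' => U (f (σ x' t)) - U h₀ :=
      funext fun x' => hu x' t
    rw [this]
    have := (hUfb.comp x hA).sub_const (U h₀)
    simpa [Function.comp_def, mul_assoc] using this
  have hut : HasDerivAt (fun t' => u x t') (U' * F' * B) t := by
    have : (fun t' => u x t') = fun t' => U (f (σ x t')) - U h₀ :=
      funext fun t' => hu x t'
    rw [this]
    have := (hUfb.comp t hB).sub_const (U h₀)
    simpa [Function.comp_def, mul_assoc] using this
  have huhx : HasDerivAt (fun x' => u x' t * h x' t)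
      (U' * F' * A * h x t + u x t * (F' * A)) x := hux.mul hhx
  -- key algebraic identities
  have hkeyW : W = g / (2 * S b) := by
    rw [hWdef, hS'def]
    exact sw_aux1 g ω b (S b) hω hSbpos.ne' hD.ne' 
  have hUb : b * U' = ω * b / 2 + S b := by
    rw [hU'def, hkeyW, hS'def]
    exact sw_aux2 g ω b (S b) hSbpos.ne' hSb2
  have hI0 : U b - U h₀ - Lam b = ω * b / 2 - S b - ω * h₀ := by
    rw [hU b, hU h₀, hLam b]; ring
  have hI1 : ω * h₀ + (U b - U h₀) - ω * b - Lam b + b * U' = 0 := by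
    linear_combination hI0 + hUb
  have hI2 : U' * (ω * h₀ + (U b - U h₀) - Lam b) + g = 0 := by
    have h3 : ω * h₀ + (U b - U h₀) - Lam b = ω * b / 2 - S b := by linarith [hI0]
    rw [h3, hU'def, hkeyW, hS'def]
    exact sw_aux3 g ω b (S b) hSbpos.ne' hSb2
  -- relation B = -Lam b * A
  have e2' : B * (1 + t * (L' * F')) = -(Lam b) := by linear_combination e2
  have e1' : A * (1 + t * (L' * F')) = 1 := by linear_combination e1
  have hBA : B = -(Lam b) * A := by linear_combination A * e2' - B * e1'
  -- rewrite the goal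
  rw [hht.deriv, hhx.deriv, huhx.deriv, hut.deriv, hux.deriv, hh x t, hu x t]
  constructor
  · rw [hBA]
    linear_combination (F' * A) * hI1
  · rw [hBA]
    linear_combination (F' * A) * hI2
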